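/- For a two-player symmetric game with finite action set A = {1,...,M} and payoffs s_1, s_2 (with s_2(i,j) = s_1(j,i)), the game is an exact potential game if and only if there exists a function c : A → ℝ such that (s_1(i,j) - s_1(j,i))/2 = c(j) - c(i) for all i,j ∈ A. -/
import Mathlib


/-- A two-player symmetric game is an exact potential game iff the antisymmetric part
of player 1's payoff is a difference `c j - c i`. -/
theorem stmt1 {M : ℕ} (s1 s2 : Fin M × Fin M → ℝ)
    (hsym : ∀ i j, s2 (i, j) = s1 (j, i)) :
    (∃ Φ : Fin M × Fin M → ℝ,
      (∀ i i' j, s1 (i, j) - s1 (i', j) = Φ (i, j) - Φ (i', j)) ∧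
      (∀ i j j', s2 (i, j) - s2 (i, j') = Φ (i, j) - Φ (i, j'))) ↔
    (∃ c : Fin M → ℝ, ∀ i j, (s1 (i, j) - s1 (j, i)) / 2 = c j - c i) := by
  constructor
  · rintro ⟨Φ, h1, h2⟩
    refine ⟨fun k => (s1 (k, k) - Φ (k, k)) / 2, fun i j => ?_⟩
    have e1 := h1 i j j
    have e2 := h2 i j i
    have e3 := hsym i j
    have e4 := hsym i i
    linarith
  · rintro ⟨c, hc⟩
    refine ⟨fun p => (s1 (p.1, p.2) + s1 (p.2, p.1)) / 2 - c p.1 - c p.2, ?_, ?_⟩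
    · intro i i' j
      have e1 := hc i j
      have e2 := hc i' j
      simp only []
      linarith
    · intro i j j'
      have e1 := hc j i
      have e2 := hc j' i
      have e3 := hsym i j
      have e4 := hsym i j'
      simp only []
      linarith
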